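/- Fix m ≥ 2 and even n ≥ 4, and fix a type α Dyck word A₁ = 1u0 of length n. The cardinality of the set L_{m×n} of matrices defined from A₁ equals ((C_{n/2} − 1) + 3(C_{(n−2)/2} − 1) + C_{(n−2)/2})^{m−2} · ((C_{n/2} − 1) + 2(C_{(n−2)/2} − 1)), where C_k denotes the k-th Catalan number. -/

import Mathlib

/-- number of 1's in a binary word (1 = `true`) -/
def ones (w : List Bool) : ℕ := w.count true

/-- number of 0's in a binary word (0 = `false`) -/
def zeros (w : List Bool) : ℕ := w.count false

/-- Dyck word: equally many 1's and 0's, every prefix has at least as many 1's as 0's. -/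
def IsDyck (w : List Bool) : Prop :=
  ones w = zeros w ∧ ∀ γ : List Bool, γ <+: w → zeros γ ≤ ones γ

/-- type α Dyck word: a Dyck word all of whose nonempty proper prefixes have
strictly more 1's than 0's. -/
def IsAlphaDyck (v : List Bool) : Prop :=
  IsDyck v ∧ ∀ γ : List Bool, γ <+: v → γ ≠ [] → γ ≠ v → zeros γ < ones γ

/-- two strings are non-overlapping: no nonempty proper prefix of either equals a
nonempty proper suffix of the other. -/
def NonOverlapping (x y : List Bool) : Prop :=
  ∀ s : List Bool, s ≠ [] →
    ¬(s <+: x ∧ s ≠ x ∧ s <:+ y ∧ s ≠ y) ∧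
    ¬(s <+: y ∧ s ≠ y ∧ s <:+ x ∧ s ≠ x)

/-- type 1 row: a Dyck word of length n different from A₁. -/
def Row1 (n : ℕ) (A₁ r : List Bool) : Prop := IsDyck r ∧ r.length = n ∧ r ≠ A₁

/-- type 2 row: 11w, w Dyck of length n−2, w ≠ u. -/
def Row2 (n : ℕ) (u r : List Bool) : Prop :=
  ∃ w : List Bool, IsDyck w ∧ w.length = n - 2 ∧ w ≠ u ∧ r = true :: true :: w

/-- type 3 row: w00, w Dyck of length n−2, w ≠ u. -/
def Row3 (n : ℕ) (u r : List Bool) : Prop :=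
  ∃ w : List Bool, IsDyck w ∧ w.length = n - 2 ∧ w ≠ u ∧ r = w ++ [false, false]

/-- type 4 row: 01w, w Dyck of length n−2, w ≠ u. -/
def Row4 (n : ℕ) (u r : List Bool) : Prop :=
  ∃ w : List Bool, IsDyck w ∧ w.length = n - 2 ∧ w ≠ u ∧ r = false :: true :: w

/-- type 5 row: 0w0, w Dyck of length n−2. -/
def Row5 (n : ℕ) (r : List Bool) : Prop :=
  ∃ w : List Bool, IsDyck w ∧ w.length = n - 2 ∧ r = false :: (w ++ [false])


open List DyckStep

private def toStep : Bool → DyckStep := fun b => if b then U else D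
private def stepBool : DyckStep → Bool := fun s => match s with | U => true | D => false

private lemma toStep_inj : Function.Injective toStep := by decide

private lemma stepBool_inj : Function.Injective stepBool := by
  intro a b h; cases a <;> cases b <;> first | rfl | exact absurd h (by simp [stepBool])

private lemma stepBool_toStep : ∀ b, stepBool (toStep b) = b := by decide
private lemma toStep_stepBool : ∀ s, toStep (stepBool s) = s := by
  intro s; cases s <;> rfl

private lemma count_U_map (w : List Bool) : (w.map toStep).count U = ones w := by
  have : U = toStep true := rfl
  rw [this, count_map_of_injective _ _ toStep_inj]; rfl

private lemma count_D_map (w : List Bool) : (w.map toStep).count D = zeros w := by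
  have : D = toStep false := rfl
  rw [this, count_map_of_injective _ _ toStep_inj]; rfl

private lemma ones_map (l : List DyckStep) : ones (l.map stepBool) = l.count U := by
  unfold ones
  have : (true : Bool) = stepBool U := rfl
  rw [this, count_map_of_injective _ _ stepBool_inj]

private lemma zeros_map (l : List DyckStep) : zeros (l.map stepBool) = l.count D := by
  unfold zeros
  have : (false : Bool) = stepBool D := rfl
  rw [this, count_map_of_injective _ _ stepBool_inj]

private lemma ones_add_zeros (w : List Bool) : ones w + zeros w = w.length := by
  induction w with
  | nil => rfl
  | cons b t ih =>
    unfold ones zeros at ih ⊢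
    cases b <;> simp [List.count_cons] <;> omega

private def dyckEquiv (k : ℕ) :
    {w : List Bool // IsDyck w ∧ w.length = 2 * k} ≃ {p : DyckWord // p.semilength = k} where
  toFun w := ⟨⟨w.1.map toStep,
      by rw [count_U_map, count_D_map]; exact w.2.1.1,
      fun i => by
        rw [← List.map_take, count_U_map, count_D_map]
        exact w.2.1.2 _ (List.take_prefix _ _)⟩,
      by
        have h1 := w.2.1.1
        have h2 := ones_add_zeros w.1
        have h3 := w.2.2
        show (w.1.map toStep).count U = k
        rw [count_U_map]; omega⟩
  invFun p := ⟨p.1.toList.map stepBool,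
      ⟨⟨by rw [ones_map, zeros_map]; exact p.1.count_U_eq_count_D,
        fun γ hγ => by
          rw [List.prefix_iff_eq_take] at hγ
          rw [hγ, ← List.map_take, ones_map, zeros_map]
          exact p.1.count_D_le_count_U _⟩,
       by
        rw [List.length_map, ← p.1.two_mul_semilength_eq_length, p.2]⟩⟩
  left_inv w := by
    ext1
    simp only [List.map_map]
    have : stepBool ∘ toStep = id := funext stepBool_toStep
    rw [this, List.map_id]
  right_inv p := by
    ext1; ext1
    simp only [List.map_map]
    have : toStep ∘ stepBool = id := funext toStep_stepBool
    rw [this, List.map_id]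

private lemma dyck_finite (k : ℕ) : {w : List Bool | IsDyck w ∧ w.length = 2 * k}.Finite := by
  rw [← Set.finite_coe_iff]
  exact Finite.of_equiv _ (dyckEquiv k).symm

private lemma dyck_ncard (k : ℕ) :
    {w : List Bool | IsDyck w ∧ w.length = 2 * k}.ncard = catalan k := by
  rw [← Nat.card_coe_set_eq]
  refine (Nat.card_congr ((Equiv.subtypeEquivRight (fun w =>
    show w ∈ {w : List Bool | IsDyck w ∧ w.length = 2*k} ↔ _ from Iff.rfl)).trans
    (dyckEquiv k))).trans ?_
  rw [Nat.card_eq_fintype_card, DyckWord.card_dyckWord_semilength_eq_catalan]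

private lemma dyck_head {w : List Bool} (h : IsDyck w) (hne : w ≠ []) : w.head? = some true := by
  match w, hne with
  | true :: t, _ => rfl
  | false :: t, _ =>
    have := h.2 [false] ⟨t, rfl⟩
    simp [ones, zeros] at this

-- signatures
private lemma sig1 {n : ℕ} {A₁ r : List Bool} (hn : 4 ≤ n) (h : Row1 n A₁ r) :
    ones r = zeros r ∧ r.head? = some true := by
  refine ⟨h.1.1, dyck_head h.1 ?_⟩
  intro e
  have hl := h.2.1
  rw [e] at hl
  simp at hl
  omega

private lemma sigr2 {n : ℕ} {u r : List Bool} (h : Row2 n u r) :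
    ones r = zeros r + 2 := by
  obtain ⟨w, hw, -, -, rfl⟩ := h
  have h1 : w.count true = w.count false := hw.1
  simp [ones, zeros, List.count_cons]
  omega

private lemma sigr3 {n : ℕ} {u r : List Bool} (hn : 4 ≤ n) (h : Row3 n u r) :
    zeros r = ones r + 2 ∧ r.head? = some true := by
  obtain ⟨w, hw, hl, -, rfl⟩ := h
  constructor
  · have h1 : w.count true = w.count false := hw.1
    simp [ones, zeros]
    omega
  · have hwne : w ≠ [] := by intro e; rw [e] at hl; simp at hl; omega
    rw [List.head?_append_of_ne_nil _ hwne]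
    exact dyck_head hw hwne

private lemma sigr4 {n : ℕ} {u r : List Bool} (h : Row4 n u r) :
    ones r = zeros r ∧ r.head? = some false := by
  obtain ⟨w, hw, -, -, rfl⟩ := h
  refine ⟨?_, rfl⟩
  have h1 : w.count true = w.count false := hw.1
  simp [ones, zeros, List.count_cons]
  omega

private lemma sigr5 {n : ℕ} {r : List Bool} (h : Row5 n r) :
    zeros r = ones r + 2 ∧ r.head? = some false := by
  obtain ⟨w, hw, -, rfl⟩ := h
  refine ⟨?_, rfl⟩
  have h1 : w.count true = w.count false := hw.1
  simp [ones, zeros, List.count_cons]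
  omega

section RowSets

variable {n : ℕ} {u A₁ : List Bool}

private lemma row1_eq : {r | Row1 n A₁ r} = {w | IsDyck w ∧ w.length = n} \ {A₁} := by
  ext r
  constructor
  · rintro ⟨h1, h2, h3⟩; exact ⟨⟨h1, h2⟩, h3⟩
  · rintro ⟨⟨h1, h2⟩, h3⟩; exact ⟨h1, h2, h3⟩

private lemma row2_eq : {r | Row2 n u r} =
    (fun w => true :: true :: w) '' ({w | IsDyck w ∧ w.length = n - 2} \ {u}) := by
  ext r
  constructor
  · rintro ⟨w, h1, h2, h3, rfl⟩; exact ⟨w, ⟨⟨h1, h2⟩, h3⟩, rfl⟩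
  · rintro ⟨w, ⟨⟨h1, h2⟩, h3⟩, rfl⟩; exact ⟨w, h1, h2, h3, rfl⟩

private lemma row3_eq : {r | Row3 n u r} =
    (fun w => w ++ [false, false]) '' ({w | IsDyck w ∧ w.length = n - 2} \ {u}) := by
  ext r
  constructor
  · rintro ⟨w, h1, h2, h3, rfl⟩; exact ⟨w, ⟨⟨h1, h2⟩, h3⟩, rfl⟩
  · rintro ⟨w, ⟨⟨h1, h2⟩, h3⟩, rfl⟩; exact ⟨w, h1, h2, h3, rfl⟩

private lemma row4_eq : {r | Row4 n u r} =
    (fun w => false :: true :: w) '' ({w | IsDyck w ∧ w.length = n - 2} \ {u}) := by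
  ext r
  constructor
  · rintro ⟨w, h1, h2, h3, rfl⟩; exact ⟨w, ⟨⟨h1, h2⟩, h3⟩, rfl⟩
  · rintro ⟨w, ⟨⟨h1, h2⟩, h3⟩, rfl⟩; exact ⟨w, h1, h2, h3, rfl⟩

private lemma row5_eq : {r | Row5 n r} =
    (fun w => false :: (w ++ [false])) '' {w | IsDyck w ∧ w.length = n - 2} := by
  ext r
  constructor
  · rintro ⟨w, h1, h2, rfl⟩; exact ⟨w, ⟨h1, h2⟩, rfl⟩
  · rintro ⟨w, ⟨h1, h2⟩, rfl⟩; exact ⟨w, h1, h2, rfl⟩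

private lemma hn2 (hne : Even n) : n - 2 = 2 * ((n - 2) / 2) := by
  obtain ⟨t, ht⟩ := hne; omega

private lemma hnn (hne : Even n) : n = 2 * (n / 2) := by
  obtain ⟨t, ht⟩ := hne; omega

private lemma Dn_finite (hne : Even n) : {w : List Bool | IsDyck w ∧ w.length = n}.Finite := by
  rw [hnn hne]; exact dyck_finite _

private lemma D2_finite (hne : Even n) : {w : List Bool | IsDyck w ∧ w.length = n - 2}.Finite := by
  rw [hn2 hne]; exact dyck_finite _

private lemma Dn_ncard (hne : Even n) : {w : List Bool | IsDyck w ∧ w.length = n}.ncard = catalan (n / 2) := by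
  nth_rw 1 [hnn hne]; exact dyck_ncard _

private lemma D2_ncard (hne : Even n) :
    {w : List Bool | IsDyck w ∧ w.length = n - 2}.ncard = catalan ((n - 2) / 2) := by
  nth_rw 1 [hn2 hne]; exact dyck_ncard _

private lemma A₁_mem (hn : 4 ≤ n) (hu : IsDyck u) (hul : u.length = n - 2) (hA₁ : A₁ = true :: (u ++ [false])) (hα : IsAlphaDyck A₁) : A₁ ∈ {w : List Bool | IsDyck w ∧ w.length = n} := by
  refine ⟨hα.1, ?_⟩
  rw [hA₁]; simp [hul]; omega

private lemma row1_finite (hne : Even n) : {r | Row1 n A₁ r}.Finite :=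
  row1_eq ▸ (Dn_finite hne).diff (t := {A₁})

private lemma row1_ncard (hn : 4 ≤ n) (hne : Even n) (hu : IsDyck u) (hul : u.length = n - 2) (hA₁ : A₁ = true :: (u ++ [false])) (hα : IsAlphaDyck A₁) : {r | Row1 n A₁ r}.ncard = catalan (n / 2) - 1 := by
  rw [row1_eq, Set.ncard_diff_singleton_of_mem (A₁_mem hn hu hul hA₁ hα),
    Dn_ncard hne]

private lemma u_mem (hu : IsDyck u) (hul : u.length = n - 2) : u ∈ {w : List Bool | IsDyck w ∧ w.length = n - 2} := ⟨hu, hul⟩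

private lemma row2_finite (hne : Even n) : {r | Row2 n u r}.Finite :=
  row2_eq ▸ (((D2_finite hne).diff (t := {u})).image _)

private lemma row3_finite (hne : Even n) : {r | Row3 n u r}.Finite :=
  row3_eq ▸ (((D2_finite hne).diff (t := {u})).image _)

private lemma row4_finite (hne : Even n) : {r | Row4 n u r}.Finite :=
  row4_eq ▸ (((D2_finite hne).diff (t := {u})).image _)

private lemma row5_finite (hne : Even n) : {r | Row5 n r}.Finite :=
  row5_eq ▸ ((D2_finite hne).image _)

private lemma diff_u_ncard (hne : Even n) (hu : IsDyck u) (hul : u.length = n - 2) :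
    ({w : List Bool | IsDyck w ∧ w.length = n - 2} \ {u}).ncard = catalan ((n - 2) / 2) - 1 := by
  rw [Set.ncard_diff_singleton_of_mem (u_mem hu hul), D2_ncard hne]

private lemma row2_ncard (hne : Even n) (hu : IsDyck u) (hul : u.length = n - 2) : {r | Row2 n u r}.ncard = catalan ((n - 2) / 2) - 1 := by
  rw [row2_eq, Set.ncard_image_of_injective _ (fun a b h => by simpa using h),
    diff_u_ncard hne hu hul]

private lemma row3_ncard (hne : Even n) (hu : IsDyck u) (hul : u.length = n - 2) : {r | Row3 n u r}.ncard = catalan ((n - 2) / 2) - 1 := by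
  rw [row3_eq, Set.ncard_image_of_injective _ (fun a b h => by simpa using h),
    diff_u_ncard hne hu hul]

private lemma row4_ncard (hne : Even n) (hu : IsDyck u) (hul : u.length = n - 2) : {r | Row4 n u r}.ncard = catalan ((n - 2) / 2) - 1 := by
  rw [row4_eq, Set.ncard_image_of_injective _ (fun a b h => by simpa using h),
    diff_u_ncard hne hu hul]

private lemma row5_ncard (hne : Even n) : {r | Row5 n r}.ncard = catalan ((n - 2) / 2) := by
  rw [row5_eq, Set.ncard_image_of_injective _ (fun a b h => by simpa using h),
    D2_ncard hne]

-- disjointness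
private lemma d12 (hn : 4 ≤ n) : Disjoint {r | Row1 n A₁ r} {r | Row2 n u r} :=
  Set.disjoint_left.mpr fun r h1 h2 => by
    have s1 := (sig1 hn h1).1; have s2 := sigr2 h2; omega

private lemma d13 (hn : 4 ≤ n) : Disjoint {r | Row1 n A₁ r} {r | Row3 n u r} :=
  Set.disjoint_left.mpr fun r h1 h2 => by
    have s1 := (sig1 hn h1).1; have s2 := (sigr3 hn h2).1; omega

private lemma d14 (hn : 4 ≤ n) : Disjoint {r | Row1 n A₁ r} {r | Row4 n u r} :=
  Set.disjoint_left.mpr fun r h1 h2 => by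
    have s1 := (sig1 hn h1).2; have s2 := (sigr4 h2).2; rw [s1] at s2; simp at s2

private lemma d15 (hn : 4 ≤ n) : Disjoint {r | Row1 n A₁ r} {r | Row5 n r} :=
  Set.disjoint_left.mpr fun r h1 h2 => by
    have s1 := (sig1 hn h1).1; have s2 := (sigr5 h2).1; omega

private lemma d23 (hn : 4 ≤ n) : Disjoint {r | Row2 n u r} {r | Row3 n u r} :=
  Set.disjoint_left.mpr fun r h1 h2 => by
    have s1 := sigr2 h1; have s2 := (sigr3 hn h2).1; omega

private lemma d24 : Disjoint {r | Row2 n u r} {r | Row4 n u r} :=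
  Set.disjoint_left.mpr fun r h1 h2 => by
    have s1 := sigr2 h1; have s2 := (sigr4 h2).1; omega

private lemma d25 : Disjoint {r | Row2 n u r} {r | Row5 n r} :=
  Set.disjoint_left.mpr fun r h1 h2 => by
    have s1 := sigr2 h1; have s2 := (sigr5 h2).1; omega

private lemma d34 (hn : 4 ≤ n) : Disjoint {r | Row3 n u r} {r | Row4 n u r} :=
  Set.disjoint_left.mpr fun r h1 h2 => by
    have s1 := (sigr3 hn h1).1; have s2 := (sigr4 h2).1; omega

private lemma d35 (hn : 4 ≤ n) : Disjoint {r | Row3 n u r} {r | Row5 n r} :=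
  Set.disjoint_left.mpr fun r h1 h2 => by
    have s1 := (sigr3 hn h1).2; have s2 := (sigr5 h2).2; rw [s1] at s2; simp at s2

private lemma d45 : Disjoint {r | Row4 n u r} {r | Row5 n r} :=
  Set.disjoint_left.mpr fun r h1 h2 => by
    have s1 := (sigr4 h1).1; have s2 := (sigr5 h2).1; omega

private lemma mid_eq :
    {r | Row1 n A₁ r ∨ Row2 n u r ∨ Row3 n u r ∨ Row4 n u r ∨ Row5 n r} =
      ((({r | Row1 n A₁ r} ∪ {r | Row2 n u r}) ∪ {r | Row3 n u r}) ∪ {r | Row4 n u r})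
        ∪ {r | Row5 n r} := by
  ext r; simp [Set.mem_union]; tauto

private lemma last_eq :
    {r | Row1 n A₁ r ∨ Row2 n u r ∨ Row3 n u r} =
      ({r | Row1 n A₁ r} ∪ {r | Row2 n u r}) ∪ {r | Row3 n u r} := by
  ext r; simp [Set.mem_union]; tauto

private lemma last_finite (hne : Even n) :
    {r | Row1 n A₁ r ∨ Row2 n u r ∨ Row3 n u r}.Finite := by
  rw [last_eq]
  exact (((row1_finite hne).union (row2_finite hne)).union (row3_finite hne))

private lemma mid_finite (hne : Even n) :
    {r | Row1 n A₁ r ∨ Row2 n u r ∨ Row3 n u r ∨ Row4 n u r ∨ Row5 n r}.Finite := by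
  rw [mid_eq]
  exact ((((row1_finite hne).union (row2_finite hne)).union (row3_finite hne)).union
    (row4_finite hne)).union (row5_finite hne)

private lemma last_ncard (hn : 4 ≤ n) (hne : Even n) (hu : IsDyck u) (hul : u.length = n - 2) (hA₁ : A₁ = true :: (u ++ [false])) (hα : IsAlphaDyck A₁) :
    {r | Row1 n A₁ r ∨ Row2 n u r ∨ Row3 n u r}.ncard =
      (catalan (n / 2) - 1) + 2 * (catalan ((n - 2) / 2) - 1) := by
  rw [last_eq,
    Set.ncard_union_eq (by rw [Set.disjoint_union_left]; exact ⟨d13 hn, d23 hn⟩)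
      ((row1_finite hne).union (row2_finite hne)) (row3_finite hne),
    Set.ncard_union_eq (d12 hn) (row1_finite hne) (row2_finite hne),
    row1_ncard hn hne hu hul hA₁ hα, row2_ncard hne hu hul, row3_ncard hne hu hul]
  ring

private lemma mid_ncard (hn : 4 ≤ n) (hne : Even n) (hu : IsDyck u) (hul : u.length = n - 2) (hA₁ : A₁ = true :: (u ++ [false])) (hα : IsAlphaDyck A₁) :
    {r | Row1 n A₁ r ∨ Row2 n u r ∨ Row3 n u r ∨ Row4 n u r ∨ Row5 n r}.ncard =
      (catalan (n / 2) - 1) + 3 * (catalan ((n - 2) / 2) - 1) + catalan ((n - 2) / 2) := by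
  have f1 := row1_finite (A₁ := A₁) hne
  have f2 := row2_finite (u := u) hne
  have f3 := row3_finite (u := u) hne
  have f4 := row4_finite (u := u) hne
  have f5 := row5_finite hne
  have e5 : _root_.Disjoint
      ((({r | Row1 n A₁ r} ∪ {r | Row2 n u r}) ∪ {r | Row3 n u r}) ∪ {r | Row4 n u r})
      {r | Row5 n r} := by
    rw [Set.disjoint_union_left, Set.disjoint_union_left, Set.disjoint_union_left]
    exact ⟨⟨⟨d15 hn, d25⟩, d35 hn⟩, d45⟩
  have e4 : _root_.Disjoint
      ((({r | Row1 n A₁ r} ∪ {r | Row2 n u r}) ∪ {r | Row3 n u r}))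
      {r | Row4 n u r} := by
    rw [Set.disjoint_union_left, Set.disjoint_union_left]
    exact ⟨⟨d14 hn, d24⟩, d34 hn⟩
  have e3 : _root_.Disjoint ({r | Row1 n A₁ r} ∪ {r | Row2 n u r}) {r | Row3 n u r} := by
    rw [Set.disjoint_union_left]
    exact ⟨d13 hn, d23 hn⟩
  rw [mid_eq,
    Set.ncard_union_eq e5 (((f1.union f2).union f3).union f4) f5,
    Set.ncard_union_eq e4 ((f1.union f2).union f3) f4,
    Set.ncard_union_eq e3 (f1.union f2) f3,
    Set.ncard_union_eq (d12 hn) f1 f2,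
    row1_ncard hn hne hu hul hA₁ hα, row2_ncard hne hu hul, row3_ncard hne hu hul,
    row4_ncard hne hu hul, row5_ncard hne]
  ring

end RowSets

section Mat

private def matEquiv (m : ℕ) (hm : 2 ≤ m) (A₁ : List Bool) (Smid Slast : Set (List Bool)) :
    {A : Fin m → List Bool // A ⟨0, by omega⟩ = A₁ ∧
      (∀ i : Fin m, 0 < (i : ℕ) → (i : ℕ) < m - 1 → A i ∈ Smid) ∧
      A ⟨m - 1, by omega⟩ ∈ Slast} ≃ ((Fin (m - 2) → Smid) × Slast) where
  toFun A :=
    (fun j => ⟨A.1 ⟨(j : ℕ) + 1, by have := j.2; omega⟩,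
      A.2.2.1 ⟨(j : ℕ) + 1, by have := j.2; omega⟩ (by simp) (by have := j.2; simp; omega)⟩,
     ⟨A.1 ⟨m - 1, by omega⟩, A.2.2.2⟩)
  invFun x :=
    ⟨fun i => if h0 : (i : ℕ) = 0 then A₁ else
        if hl : (i : ℕ) = m - 1 then (x.2 : List Bool) else
          (x.1 ⟨(i : ℕ) - 1, by have := i.2; omega⟩ : List Bool),
     by
      refine ⟨by simp, fun i h1 h2 => ?_, ?_⟩
      · dsimp only
        rw [dif_neg (by omega), dif_neg (by omega)]
        exact (x.1 _).2
      · dsimp only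
        rw [dif_neg (by omega), dif_pos rfl]
        exact x.2.2⟩
  left_inv A := by
    apply Subtype.ext
    funext i
    dsimp only
    rcases Nat.eq_zero_or_pos (i : ℕ) with h0 | h0
    · rw [dif_pos h0]
      exact A.2.1.symm.trans (congrArg A.1 (Fin.ext (by show 0 = (i : ℕ); omega)))
    · rw [dif_neg (by omega)]
      by_cases hl : (i : ℕ) = m - 1
      · rw [dif_pos hl]
        exact congrArg A.1 (Fin.ext (by show m - 1 = (i : ℕ); omega))
      · rw [dif_neg hl]
        exact congrArg A.1 (Fin.ext (by show (i : ℕ) - 1 + 1 = (i : ℕ); omega))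
  right_inv x := by
    apply Prod.ext
    · funext j
      apply Subtype.ext
      dsimp only
      rw [dif_neg (by omega), dif_neg (by have := j.2; omega)]
      exact congrArg _ (congrArg x.1 (Fin.ext (by show (j : ℕ) + 1 - 1 = (j : ℕ); omega)))
    · apply Subtype.ext
      dsimp only
      rw [dif_neg (by omega), dif_pos rfl]

private lemma mat_ncard (m : ℕ) (hm : 2 ≤ m) (A₁ : List Bool) (Smid Slast : Set (List Bool)) :
    {A : Fin m → List Bool | A ⟨0, by omega⟩ = A₁ ∧
      (∀ i : Fin m, 0 < (i : ℕ) → (i : ℕ) < m - 1 → A i ∈ Smid) ∧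
      A ⟨m - 1, by omega⟩ ∈ Slast}.ncard = Smid.ncard ^ (m - 2) * Slast.ncard := by
  rw [← Nat.card_coe_set_eq]
  refine (Nat.card_congr ((Equiv.subtypeEquivRight (fun A => Iff.rfl)).trans
    (matEquiv m hm A₁ Smid Slast))).trans ?_
  simp only [Nat.card_prod, Nat.card_fun, Nat.card_eq_fintype_card, Fintype.card_fin,
    Nat.card_coe_set_eq]

end Mat

/-- cardinality of L_{m×n}, n even. -/
theorem card_L_even (m n : ℕ) (hm : 2 ≤ m) (hn : 4 ≤ n) (hne : Even n)
    (u : List Bool) (hu : IsDyck u) (hul : u.length = n - 2)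
    (A₁ : List Bool) (hA₁ : A₁ = true :: (u ++ [false])) (hα : IsAlphaDyck A₁) :
    {A : Fin m → List Bool |
        A ⟨0, by omega⟩ = A₁ ∧
        (∀ i : Fin m, 0 < (i : ℕ) → (i : ℕ) < m - 1 →
          (Row1 n A₁ (A i) ∨ Row2 n u (A i) ∨ Row3 n u (A i) ∨ Row4 n u (A i) ∨
            Row5 n (A i))) ∧
        (Row1 n A₁ (A ⟨m - 1, by omega⟩) ∨ Row2 n u (A ⟨m - 1, by omega⟩) ∨
          Row3 n u (A ⟨m - 1, by omega⟩))}.ncard =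
      ((catalan (n / 2) - 1) + 3 * (catalan ((n - 2) / 2) - 1) + catalan ((n - 2) / 2)) ^ (m - 2) *
        ((catalan (n / 2) - 1) + 2 * (catalan ((n - 2) / 2) - 1)) := by 
  have h := mat_ncard m hm A₁
    {r | Row1 n A₁ r ∨ Row2 n u r ∨ Row3 n u r ∨ Row4 n u r ∨ Row5 n r}
    {r | Row1 n A₁ r ∨ Row2 n u r ∨ Row3 n u r}
  rw [mid_ncard hn hne hu hul hA₁ hα, last_ncard hn hne hu hul hA₁ hα] at h
  exact h
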